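/- Let N ≥ 1, let x_1, …, x_N ∈ (0,1), and let ᾱ_1, …, ᾱ_N ∈ ℝ. Define w̄ : [0,1] → ℝ by w̄(x) = Σ_{j=1}^N ᾱ_j · G(x, x_j). Then w̄ is twice continuously differentiable on [0,1], satisfies w̄(0) = 0, w̄'(1) = 0 and w̄''(0) = 0, and for every twice continuously differentiable v : [0,1] → ℝ with v(0) = 0 and v'(1) = 0 one has ∫_0^1 w̄''(x) v''(x) dx = Σ_{j=1}^N ᾱ_j · v(x_j); that is, w̄ is the weak steady-state solution of the beam equation with pointwise loads ᾱ_j δ(· − x_j). -/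

import Mathlib

open MeasureTheory Set

/-- The Green's function of the simply supported–shear hinged beam. -/
noncomputable def G (x ξ : ℝ) : ℝ :=
  if x < ξ then -x ^ 3 / 6 + x * ξ * (1 - ξ / 2) else -ξ ^ 3 / 6 + ξ * x * (1 - x / 2)

noncomputable def G1 (x ξ : ℝ) : ℝ :=
  if x < ξ then -x ^ 2 / 2 + ξ * (1 - ξ / 2) else ξ * (1 - x)

lemma hasDerivAt_p (ξ x : ℝ) :
    HasDerivAt (fun y => -y ^ 3 / 6 + y * ξ * (1 - ξ / 2)) (-x ^ 2 / 2 + ξ * (1 - ξ / 2)) x := by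
  have h : HasDerivAt (fun y : ℝ => -y ^ 3 / 6 + y * ξ * (1 - ξ / 2))
      (-(↑3 * x ^ (3 - 1)) / 6 + 1 * ξ * (1 - ξ / 2)) x :=
    ((hasDerivAt_pow 3 x).neg.div_const 6).add (((hasDerivAt_id x).mul_const ξ).mul_const _)
  convert h using 1
  norm_num; ring

lemma hasDerivAt_q (ξ x : ℝ) :
    HasDerivAt (fun y => -ξ ^ 3 / 6 + ξ * y * (1 - y / 2)) (ξ * (1 - x)) x := by
  have h : HasDerivAt (fun y : ℝ => -ξ ^ 3 / 6 + (ξ * y - ξ * y ^ 2 / 2))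
      (0 + (ξ * 1 - ξ * (↑2 * x ^ (2 - 1)) / 2)) x := by
    exact (hasDerivAt_const x _).add
      (((hasDerivAt_id x).const_mul ξ).sub (((hasDerivAt_pow 2 x).const_mul ξ).div_const 2))
  have he : (fun y : ℝ => -ξ ^ 3 / 6 + ξ * y * (1 - y / 2))
      = fun y : ℝ => -ξ ^ 3 / 6 + (ξ * y - ξ * y ^ 2 / 2) := by funext y; ring
  rw [he]
  convert h using 1
  norm_num; ring

lemma hasDerivAt_G (ξ x : ℝ) : HasDerivAt (fun y => G y ξ) (G1 x ξ) x := by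
  rcases lt_trichotomy x ξ with h | h | h
  · have hev : (fun y => G y ξ) =ᶠ[nhds x] fun y => -y ^ 3 / 6 + y * ξ * (1 - ξ / 2) := by
      filter_upwards [Iio_mem_nhds h] with y hy
      rw [G, if_pos (mem_Iio.mp hy)]
    rw [G1, if_pos h]
    exact (hasDerivAt_p ξ x).congr_of_eventuallyEq hev
  · subst h
    have hval : G1 x x = x * (1 - x) := by rw [G1, if_neg (lt_irrefl x)]
    rw [hval]
    have hleft : HasDerivWithinAt (fun y => G y x) (x * (1 - x)) (Iic x) x := by
      have hp : HasDerivAt (fun y => -y ^ 3 / 6 + y * x * (1 - x / 2)) (x * (1 - x)) x := by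
        convert hasDerivAt_p x x using 1; ring
      refine hp.hasDerivWithinAt.congr (fun y hy => ?_) ?_
      · rcases lt_or_eq_of_le (mem_Iic.mp hy) with h' | h'
        · simp [G, h']
        · subst h'; rw [G, if_neg (lt_irrefl y)]
      · rw [G, if_neg (lt_irrefl x)]
    have hright : HasDerivWithinAt (fun y => G y x) (x * (1 - x)) (Ici x) x := by
      have hq : HasDerivAt (fun y => -x ^ 3 / 6 + x * y * (1 - y / 2)) (x * (1 - x)) x :=
        hasDerivAt_q x x
      refine hq.hasDerivWithinAt.congr (fun y hy => ?_) ?_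
      · rw [G, if_neg (not_lt.2 (hy : x ≤ y))]
      · rw [G, if_neg (lt_irrefl x)]
    have := hleft.union hright
    rwa [Iic_union_Ici, hasDerivWithinAt_univ] at this
  · have hev : (fun y => G y ξ) =ᶠ[nhds x] fun y => -ξ ^ 3 / 6 + ξ * y * (1 - y / 2) := by
      filter_upwards [Ioi_mem_nhds h] with y hy
      rw [G, if_neg (not_lt.2 (le_of_lt hy))]
    rw [G1, if_neg (not_lt.2 (le_of_lt h))]
    exact (hasDerivAt_q ξ x).congr_of_eventuallyEq hev

lemma hasDerivAt_G1 (ξ x : ℝ) : HasDerivAt (fun y => G1 y ξ) (-(min x ξ)) x := by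
  rcases lt_trichotomy x ξ with h | h | h
  · have hev : (fun y => G1 y ξ) =ᶠ[nhds x] fun y => -y ^ 2 / 2 + ξ * (1 - ξ / 2) := by
      filter_upwards [Iio_mem_nhds h] with y hy
      rw [G1, if_pos (mem_Iio.mp hy)]
    rw [min_eq_left h.le]
    have hp : HasDerivAt (fun y : ℝ => -y ^ 2 / 2 + ξ * (1 - ξ / 2)) (-x) x := by
      have : HasDerivAt (fun y : ℝ => -y ^ 2 / 2 + ξ * (1 - ξ / 2)) (-(↑2 * x ^ (2 - 1)) / 2) x :=
        ((hasDerivAt_pow 2 x).neg.div_const 2).add_const (ξ * (1 - ξ / 2))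
      convert this using 1
      norm_num; ring
    exact hp.congr_of_eventuallyEq hev
  · subst h
    rw [min_self]
    have hleft : HasDerivWithinAt (fun y => G1 y x) (-x) (Iic x) x := by
      have hp : HasDerivAt (fun y : ℝ => -y ^ 2 / 2 + x * (1 - x / 2)) (-x) x := by
        have : HasDerivAt (fun y : ℝ => -y ^ 2 / 2 + x * (1 - x / 2)) (-(↑2 * x ^ (2 - 1)) / 2) x :=
          ((hasDerivAt_pow 2 x).neg.div_const 2).add_const (x * (1 - x / 2))
        convert this using 1
        norm_num; ring
      refine hp.hasDerivWithinAt.congr (fun y hy => ?_) ?_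
      · rcases lt_or_eq_of_le (mem_Iic.mp hy) with h' | h'
        · simp [G1, h']
        · subst h'; rw [G1, if_neg (lt_irrefl y)]; ring_nf
      · rw [G1, if_neg (lt_irrefl x)]; ring
    have hright : HasDerivWithinAt (fun y => G1 y x) (-x) (Ici x) x := by
      have hq : HasDerivAt (fun y : ℝ => x * (1 - y)) (-x) x := by
        have : HasDerivAt (fun y : ℝ => x - x * y) (0 - x * 1) x :=
          (hasDerivAt_const _ _).sub ((hasDerivAt_id x).const_mul x)
        have he : (fun y : ℝ => x * (1 - y)) = fun y : ℝ => x - x * y := by funext y; ring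
        rw [he]; convert this using 1; ring
      refine hq.hasDerivWithinAt.congr (fun y hy => ?_) ?_
      · rw [G1, if_neg (not_lt.2 (hy : x ≤ y))]
      · rw [G1, if_neg (lt_irrefl x)]
    have := hleft.union hright
    rwa [Iic_union_Ici, hasDerivWithinAt_univ] at this
  · have hev : (fun y => G1 y ξ) =ᶠ[nhds x] fun y => ξ * (1 - y) := by
      filter_upwards [Ioi_mem_nhds h] with y hy
      rw [G1, if_neg (not_lt.2 (le_of_lt hy))]
    rw [min_eq_right h.le]
    have hq : HasDerivAt (fun y : ℝ => ξ * (1 - y)) (-ξ) x := by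
      have : HasDerivAt (fun y : ℝ => ξ - ξ * y) (0 - ξ * 1) x :=
        (hasDerivAt_const _ _).sub ((hasDerivAt_id x).const_mul ξ)
      have he : (fun y : ℝ => ξ * (1 - y)) = fun y : ℝ => ξ - ξ * y := by funext y; ring
      rw [he]; convert this using 1; ring
    exact hq.congr_of_eventuallyEq hev

lemma contDiff_G (ξ : ℝ) : ContDiff ℝ 2 (fun x => G x ξ) := by
  have hd : deriv (fun x => G x ξ) = fun x => G1 x ξ := funext fun x => (hasDerivAt_G ξ x).deriv
  have hd1 : deriv (fun x => G1 x ξ) = fun x => -(min x ξ) :=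
    funext fun x => (hasDerivAt_G1 ξ x).deriv
  rw [show (2 : WithTop ℕ∞) = 1 + 1 from rfl, contDiff_succ_iff_deriv]
  refine ⟨fun x => (hasDerivAt_G ξ x).differentiableAt, by simp, ?_⟩
  rw [hd, contDiff_one_iff_deriv]
  exact ⟨fun x => (hasDerivAt_G1 ξ x).differentiableAt,
    by rw [hd1]; exact (continuous_id.min continuous_const).neg⟩

lemma iter2_eq {f f' f'' : ℝ → ℝ} (hf : ∀ x, HasDerivAt f (f' x) x)
    (hf' : ∀ x, HasDerivAt f' (f'' x) x) {x : ℝ} (hx : x ∈ Icc (0:ℝ) 1) :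
    iteratedDerivWithin 2 f (Icc 0 1) x = f'' x := by
  have uds : UniqueDiffOn ℝ (Icc (0:ℝ) 1) := uniqueDiffOn_Icc zero_lt_one
  have h1 : Set.EqOn (iteratedDerivWithin 1 f (Icc 0 1)) f' (Icc 0 1) := fun y hy => by
    rw [iteratedDerivWithin_one]
    exact (hf y).hasDerivWithinAt.derivWithin (uds y hy)
  rw [show (2:ℕ) = 1+1 from rfl, iteratedDerivWithin_succ,
    derivWithin_congr h1 (h1 hx)]
  exact (hf' x).hasDerivWithinAt.derivWithin (uds x hx)

/-- For `x_1, …, x_N ∈ (0,1)` and `ᾱ_1, …, ᾱ_N ∈ ℝ`, the superposition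
`w̄(x) = Σ_j ᾱ_j G(x, x_j)` is `C²` on `[0,1]`, satisfies `w̄(0) = w̄'(1) = w̄''(0) = 0`,
and for every `C²` function `v` on `[0,1]` with `v(0) = 0`, `v'(1) = 0` one has
`∫_0^1 w̄'' v'' = Σ_j ᾱ_j v(x_j)`; i.e. `w̄` is the weak steady-state solution with
pointwise loads `ᾱ_j δ(· − x_j)`. -/
theorem stmt16 (N : ℕ) (hN : 1 ≤ N) (xs : Fin N → ℝ)
    (hxs : ∀ j, xs j ∈ Set.Ioo (0:ℝ) 1) (α : Fin N → ℝ) :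
    ContDiffOn ℝ 2 (fun x => ∑ j, α j * G x (xs j)) (Set.Icc 0 1) ∧
    (∑ j, α j * G 0 (xs j)) = 0 ∧
    derivWithin (fun x => ∑ j, α j * G x (xs j)) (Set.Icc 0 1) 1 = 0 ∧
    iteratedDerivWithin 2 (fun x => ∑ j, α j * G x (xs j)) (Set.Icc 0 1) 0 = 0 ∧
    ∀ v : ℝ → ℝ, ContDiffOn ℝ 2 v (Set.Icc 0 1) → v 0 = 0 →
      derivWithin v (Set.Icc 0 1) 1 = 0 →
      ∫ x in (0:ℝ)..1,
        iteratedDerivWithin 2 (fun y => ∑ j, α j * G y (xs j)) (Set.Icc 0 1) x *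
          iteratedDerivWithin 2 v (Set.Icc 0 1) x
        = ∑ j, α j * v (xs j) := by
  have uds : UniqueDiffOn ℝ (Icc (0:ℝ) 1) := uniqueDiffOn_Icc zero_lt_one
  set w : ℝ → ℝ := fun x => ∑ j, α j * G x (xs j) with hw_def
  have hw : ∀ x, HasDerivAt w (∑ j, α j * G1 x (xs j)) x := fun x =>
    HasDerivAt.fun_sum fun j _ => (hasDerivAt_G (xs j) x).const_mul (α j)
  have hw' : ∀ x, HasDerivAt (fun x => ∑ j, α j * G1 x (xs j))
      (∑ j, α j * (-(min x (xs j)))) x := fun x =>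
    HasDerivAt.fun_sum fun j _ => (hasDerivAt_G1 (xs j) x).const_mul (α j)
  refine ⟨?_, ?_, ?_, ?_, ?_⟩
  · exact (ContDiff.sum fun j _ => contDiff_const.mul (contDiff_G (xs j))).contDiffOn
  · refine Finset.sum_eq_zero fun j _ => ?_
    have : G 0 (xs j) = 0 := by rw [G, if_pos (hxs j).1]; ring
    rw [this, mul_zero]
  · have h1 : (1:ℝ) ∈ Icc (0:ℝ) 1 := ⟨zero_le_one, le_refl 1⟩
    rw [(hw 1).hasDerivWithinAt.derivWithin (uds 1 h1)]
    refine Finset.sum_eq_zero fun j _ => ?_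
    have : G1 1 (xs j) = 0 := by
      rw [G1, if_neg (not_lt.2 (hxs j).2.le)]; ring
    rw [this, mul_zero]
  · rw [iter2_eq hw hw' (⟨le_refl 0, zero_le_one⟩ : (0:ℝ) ∈ Icc (0:ℝ) 1)]
    refine Finset.sum_eq_zero fun j _ => ?_
    rw [min_eq_left (hxs j).1.le, neg_zero, mul_zero]
  · intro v hv hv0 hv1
    set V1 : ℝ → ℝ := derivWithin v (Icc 0 1) with hV1_def
    set V2 : ℝ → ℝ := iteratedDerivWithin 2 v (Icc 0 1) with hV2_def
    have hV1cd : ContDiffOn ℝ 1 V1 (Icc 0 1) := hv.derivWithin uds (by norm_num)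
    have hV1cont : ContinuousOn V1 (Icc 0 1) := hV1cd.continuousOn
    have hV2cont : ContinuousOn V2 (Icc 0 1) :=
      hv.continuousOn_iteratedDerivWithin (by norm_num) uds
    have hV2eq : ∀ x ∈ Icc (0:ℝ) 1, V2 x = derivWithin V1 (Icc 0 1) x := fun x hx => by
      rw [hV2_def, show (2:ℕ) = 1+1 from rfl, iteratedDerivWithin_succ]
      exact derivWithin_congr (fun y hy => congrFun iteratedDerivWithin_one y)
        (congrFun iteratedDerivWithin_one x)
    have hV1deriv : ∀ x ∈ Ioo (0:ℝ) 1, HasDerivAt V1 (V2 x) x := fun x hx => by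
      have hmem : Icc (0:ℝ) 1 ∈ nhds x := Icc_mem_nhds hx.1 hx.2
      have h := (hV1cd.differentiableOn one_ne_zero x (Ioo_subset_Icc_self hx)).hasDerivWithinAt
      rw [← hV2eq x (Ioo_subset_Icc_self hx)] at h
      exact h.hasDerivAt hmem
    have hvderiv : ∀ x ∈ Ioo (0:ℝ) 1, HasDerivAt v (V1 x) x := fun x hx =>
      ((hv.differentiableOn (by norm_num) x (Ioo_subset_Icc_self hx)).hasDerivWithinAt).hasDerivAt
        (Icc_mem_nhds hx.1 hx.2)
    have key : ∀ ξ ∈ Ioo (0:ℝ) 1, ∫ x in (0:ℝ)..1, (-(min x ξ)) * V2 x = v ξ := by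
      intro ξ hξ
      have hξ0 : (0:ℝ) ≤ ξ := hξ.1.le
      have hξ1 : ξ ≤ 1 := hξ.2.le
      have hIcc1 : Icc (0:ℝ) ξ ⊆ Icc 0 1 := Icc_subset_Icc le_rfl hξ1
      have hIcc2 : Icc ξ (1:ℝ) ⊆ Icc 0 1 := Icc_subset_Icc hξ0 le_rfl
      have hcontInt : ContinuousOn (fun x => (-(min x ξ)) * V2 x) (Icc 0 1) :=
        ((continuous_id.min continuous_const).neg.continuousOn).mul hV2cont
      have hI1 : IntervalIntegrable (fun x => (-(min x ξ)) * V2 x) volume 0 ξ :=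
        (hcontInt.mono (by rw [uIcc_of_le hξ0]; exact hIcc1)).intervalIntegrable
      have hI2 : IntervalIntegrable (fun x => (-(min x ξ)) * V2 x) volume ξ 1 :=
        (hcontInt.mono (by rw [uIcc_of_le hξ1]; exact hIcc2)).intervalIntegrable
      have hsplit := (intervalIntegral.integral_add_adjacent_intervals hI1 hI2).symm
      have hfirst : ∫ x in (0:ℝ)..ξ, (-(min x ξ)) * V2 x = v ξ - ξ * V1 ξ := by
        have hcongr : Set.EqOn (fun x => (-(min x ξ)) * V2 x) (fun x => (-x) * V2 x)
            (Set.uIcc 0 ξ) := by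
          intro y hy
          rw [uIcc_of_le hξ0] at hy
          simp only [min_eq_left hy.2]
        rw [intervalIntegral.integral_congr hcongr]
        have hF : ∀ x ∈ Ioo (0:ℝ) ξ, HasDerivAt (fun y => v y - y * V1 y) ((-x) * V2 x) x := by
          intro x hx
          have hx' : x ∈ Ioo (0:ℝ) 1 := ⟨hx.1, lt_of_lt_of_le hx.2 hξ1⟩
          have h : HasDerivAt (fun y => v y - y * V1 y) (V1 x - (1 * V1 x + x * V2 x)) x :=
            (hvderiv x hx').sub ((hasDerivAt_id x).mul (hV1deriv x hx'))
          convert h using 1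
          ring
        have hcont : ContinuousOn (fun y => v y - y * V1 y) (Icc 0 ξ) :=
          (hv.continuousOn.mono hIcc1).sub (continuousOn_id.mul (hV1cont.mono hIcc1))
        have hint : IntervalIntegrable (fun x => (-x) * V2 x) volume 0 ξ := by
          refine ContinuousOn.intervalIntegrable ?_
          rw [uIcc_of_le hξ0]
          exact (continuous_neg.continuousOn).mul (hV2cont.mono hIcc1)
        rw [intervalIntegral.integral_eq_sub_of_hasDerivAt_of_le hξ0 hcont hF hint]
        rw [hv0]; ring
      have hsecond : ∫ x in ξ..(1:ℝ), (-(min x ξ)) * V2 x = ξ * V1 ξ := by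
        have hcongr : Set.EqOn (fun x => (-(min x ξ)) * V2 x) (fun x => (-ξ) * V2 x)
            (Set.uIcc ξ 1) := by
          intro y hy
          rw [uIcc_of_le hξ1] at hy
          simp only [min_eq_right hy.1]
        rw [intervalIntegral.integral_congr hcongr, intervalIntegral.integral_const_mul]
        have hintV2 : IntervalIntegrable V2 volume ξ 1 := by
          refine ContinuousOn.intervalIntegrable ?_
          rw [uIcc_of_le hξ1]
          exact hV2cont.mono hIcc2
        have hFTC : ∫ x in ξ..(1:ℝ), V2 x = V1 1 - V1 ξ := by
          refine intervalIntegral.integral_eq_sub_of_hasDerivAt_of_le hξ1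
            (hV1cont.mono hIcc2) (fun x hx => hV1deriv x ⟨lt_of_le_of_lt hξ0 hx.1, hx.2⟩) hintV2
        rw [hFTC, hv1]
        ring
      rw [hsplit, hfirst, hsecond]
      ring
    have hW2 : ∀ x ∈ Icc (0:ℝ) 1, iteratedDerivWithin 2 w (Icc 0 1) x
        = ∑ j, α j * (-(min x (xs j))) := fun x hx => iter2_eq hw hw' hx
    have hcongr : ∫ x in (0:ℝ)..1, iteratedDerivWithin 2 w (Icc 0 1) x * V2 x
        = ∫ x in (0:ℝ)..1, ∑ j, α j * ((-(min x (xs j))) * V2 x) := by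
      refine intervalIntegral.integral_congr fun y hy => ?_
      rw [uIcc_of_le zero_le_one] at hy
      rw [hW2 y hy, Finset.sum_mul]
      exact Finset.sum_congr rfl fun j _ => by ring
    rw [hcongr, intervalIntegral.integral_finset_sum]
    · refine Finset.sum_congr rfl fun j _ => ?_
      rw [intervalIntegral.integral_const_mul, key (xs j) (hxs j)]
    · intro j _
      refine ContinuousOn.intervalIntegrable ?_
      rw [uIcc_of_le zero_le_one]
      exact (continuousOn_const.mul
        (((continuous_id.min continuous_const).neg.continuousOn).mul hV2cont))
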